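/- Let V and W be finite-dimensional vector spaces over a field k, and let σ_V : V⊗V → V⊗V, σ_W : W⊗W → W⊗W, τ : V⊗W → V⊗W, φ : V⊗W → W⊗V be linear isomorphisms satisfying the separability identity (τ⊗id)∘(id⊗φ) = (id⊗φ)∘(σ_V⊗id)∘(id⊗τ)∘(σ_V^{-1}⊗id) on V⊗V⊗W, and the identity (id⊗τ)∘(φ⊗id) = (φ⊗id)∘(id⊗σ_W)∘(τ⊗id)∘(id⊗σ_W^{-1}) on V⊗W⊗W. Then the following identity holds on V⊗V⊗W⊗W: (σ_V⊗id⊗id)∘(id⊗τ⊗id)∘(σ_V^{-1}⊗id⊗id)∘(id⊗id⊗σ_W)∘(id⊗τ⊗id)∘(id⊗id⊗σ_W^{-1}) = (id⊗id⊗σ_W)∘(id⊗τ⊗id)∘(id⊗id⊗σ_W^{-1})∘(σ_V⊗id⊗id)∘(id⊗τ⊗id)∘(σ_V^{-1}⊗id⊗id). -/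
import Mathlib

open TensorProduct LinearMap

/-- Apply a linear map to the first two factors of a right-nested triple tensor product,
using the canonical associativity identifications. -/
noncomputable def fstMap (k : Type*) [Field k] {A B A' B' : Type*}
    [AddCommGroup A] [Module k A] [AddCommGroup B] [Module k B]
    [AddCommGroup A'] [Module k A'] [AddCommGroup B'] [Module k B']
    (C : Type*) [AddCommGroup C] [Module k C]
    (f : A ⊗[k] B →ₗ[k] A' ⊗[k] B') :
    A ⊗[k] (B ⊗[k] C) →ₗ[k] A' ⊗[k] (B' ⊗[k] C) :=
  (TensorProduct.assoc k A' B' C).toLinearMap ∘ₗ f.rTensor C ∘ₗ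
    (TensorProduct.assoc k A B C).symm.toLinearMap

section Helpers

variable (k : Type*) [Field k]
variable (A B C D A' B' C' A'' B'' C'' : Type*)
variable [AddCommGroup A] [Module k A] [AddCommGroup B] [Module k B]
  [AddCommGroup C] [Module k C] [AddCommGroup D] [Module k D]
  [AddCommGroup A'] [Module k A'] [AddCommGroup B'] [Module k B']
  [AddCommGroup C'] [Module k C']
  [AddCommGroup A''] [Module k A''] [AddCommGroup B''] [Module k B'']
  [AddCommGroup C''] [Module k C'']

/-- The canonical equivalence `(A⊗(B⊗C))⊗D ≃ A⊗(B⊗(C⊗D))`. -/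
noncomputable def quadE :
    (A ⊗[k] (B ⊗[k] C)) ⊗[k] D ≃ₗ[k] A ⊗[k] (B ⊗[k] (C ⊗[k] D)) :=
  (TensorProduct.assoc k A (B ⊗[k] C) D) ≪≫ₗ
    TensorProduct.congr (LinearEquiv.refl k A) (TensorProduct.assoc k B C D)

variable {k A B C A' B' C' A'' B'' C''}

/-- Extend a map on the first three factors of a right-nested fourfold tensor product. -/
noncomputable def trip (g : A ⊗[k] (B ⊗[k] C) →ₗ[k] A' ⊗[k] (B' ⊗[k] C')) :
    A ⊗[k] (B ⊗[k] (C ⊗[k] D)) →ₗ[k] A' ⊗[k] (B' ⊗[k] (C' ⊗[k] D)) :=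
  (quadE k A' B' C' D).toLinearMap ∘ₗ g.rTensor D ∘ₗ (quadE k A B C D).symm.toLinearMap

lemma trip_comp (g : A' ⊗[k] (B' ⊗[k] C') →ₗ[k] A'' ⊗[k] (B'' ⊗[k] C''))
    (h : A ⊗[k] (B ⊗[k] C) →ₗ[k] A' ⊗[k] (B' ⊗[k] C')) :
    trip D (g ∘ₗ h) = trip D g ∘ₗ trip D h := by
  ext x
  simp [trip, LinearMap.rTensor_comp]

lemma trip_fstMap (f : A ⊗[k] B →ₗ[k] A' ⊗[k] B') :
    trip D (fstMap k C f) = fstMap k (C ⊗[k] D) f := by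
  ext a b c d
  simp only [trip, fstMap, quadE, coe_comp, Function.comp_apply, LinearEquiv.coe_coe,
    AlgebraTensorModule.curry_apply, curry_apply, restrictScalars_apply,
    LinearEquiv.trans_apply, LinearEquiv.trans_symm, LinearEquiv.symm_symm,
    TensorProduct.congr_tmul, LinearEquiv.refl_apply, assoc_symm_tmul, assoc_tmul,
    rTensor_tmul, TensorProduct.congr_symm_tmul, LinearEquiv.refl_symm]
  induction f (a ⊗ₜ[k] b) using TensorProduct.induction_on with
  | zero => simp
  | tmul x y => simp
  | add x y hx hy => simp [add_tmul, hx, hy]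

lemma trip_lTensor (g : B ⊗[k] C →ₗ[k] B' ⊗[k] C') :
    trip D (lTensor A g) = lTensor A (fstMap k D g) := by
  ext a b c d
  simp only [trip, fstMap, quadE, coe_comp, Function.comp_apply, LinearEquiv.coe_coe,
    AlgebraTensorModule.curry_apply, curry_apply, restrictScalars_apply,
    LinearEquiv.trans_apply, LinearEquiv.trans_symm, LinearEquiv.symm_symm,
    TensorProduct.congr_tmul, LinearEquiv.refl_apply, assoc_symm_tmul, assoc_tmul,
    rTensor_tmul, lTensor_tmul, TensorProduct.congr_symm_tmul, LinearEquiv.refl_symm]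

lemma fstMap_comm_lTensor (f : A ⊗[k] B →ₗ[k] A' ⊗[k] B') (g : C →ₗ[k] C') :
    fstMap k C' f ∘ₗ lTensor A (lTensor B g) =
      lTensor A' (lTensor B' g) ∘ₗ fstMap k C f := by
  ext a b c
  simp only [fstMap, coe_comp, Function.comp_apply, LinearEquiv.coe_coe,
    AlgebraTensorModule.curry_apply, curry_apply, restrictScalars_apply,
    lTensor_tmul, assoc_symm_tmul, rTensor_tmul, assoc_tmul]
  induction f (a ⊗ₜ[k] b) using TensorProduct.induction_on with
  | zero => simp
  | tmul x y => simp
  | add x y hx hy => simp [add_tmul, hx, hy]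

lemma fstMap_comp (f : A ⊗[k] B →ₗ[k] A' ⊗[k] B') (f' : A' ⊗[k] B' →ₗ[k] A ⊗[k] B) :
    fstMap k C f' ∘ₗ fstMap k C f = fstMap k C (f' ∘ₗ f) := by
  ext x
  simp [fstMap, LinearMap.rTensor_comp]

lemma fstMap_id : fstMap k C (LinearMap.id : A ⊗[k] B →ₗ[k] A ⊗[k] B) = LinearMap.id := by
  ext x
  simp [fstMap]

end Helpers

/-- Given linear isomorphisms `σ_V`, `σ_W`, `τ : V⊗W ≃ V⊗W`, `φ : V⊗W ≃ W⊗V` satisfying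
the separability identity on `V⊗V⊗W` and the identity
`(id⊗τ)∘(φ⊗id) = (φ⊗id)∘(id⊗σ_W)∘(τ⊗id)∘(id⊗σ_W⁻¹)` on `V⊗W⊗W`, the mixed braid
identity (3) holds on `V⊗V⊗W⊗W`. -/
theorem mixed_braid_identity_three (k : Type*) [Field k] (V W : Type*)
    [AddCommGroup V] [Module k V] [FiniteDimensional k V]
    [AddCommGroup W] [Module k W] [FiniteDimensional k W]
    (σV : V ⊗[k] V ≃ₗ[k] V ⊗[k] V)
    (σW : W ⊗[k] W ≃ₗ[k] W ⊗[k] W)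
    (τ : V ⊗[k] W ≃ₗ[k] V ⊗[k] W)
    (φ : V ⊗[k] W ≃ₗ[k] W ⊗[k] V)
    -- separability: (τ⊗id)∘(id⊗φ) = (id⊗φ)∘(σ_V⊗id)∘(id⊗τ)∘(σ_V⁻¹⊗id) on V⊗V⊗W
    (hsep : fstMap k V τ.toLinearMap ∘ₗ lTensor V φ.toLinearMap =
      lTensor V φ.toLinearMap ∘ₗ fstMap k W σV.toLinearMap ∘ₗ
        lTensor V τ.toLinearMap ∘ₗ fstMap k W σV.symm.toLinearMap)
    -- (id⊗τ)∘(φ⊗id) = (φ⊗id)∘(id⊗σ_W)∘(τ⊗id)∘(id⊗σ_W⁻¹) on V⊗W⊗W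
    (hphi : lTensor W τ.toLinearMap ∘ₗ fstMap k W φ.toLinearMap =
      fstMap k W φ.toLinearMap ∘ₗ lTensor V σW.toLinearMap ∘ₗ
        fstMap k W τ.toLinearMap ∘ₗ lTensor V σW.symm.toLinearMap) :
    fstMap k (W ⊗[k] W) σV.toLinearMap ∘ₗ lTensor V (fstMap k W τ.toLinearMap) ∘ₗ
        fstMap k (W ⊗[k] W) σV.symm.toLinearMap ∘ₗ lTensor V (lTensor V σW.toLinearMap) ∘ₗ
          lTensor V (fstMap k W τ.toLinearMap) ∘ₗ lTensor V (lTensor V σW.symm.toLinearMap) =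
      lTensor V (lTensor V σW.toLinearMap) ∘ₗ lTensor V (fstMap k W τ.toLinearMap) ∘ₗ
        lTensor V (lTensor V σW.symm.toLinearMap) ∘ₗ fstMap k (W ⊗[k] W) σV.toLinearMap ∘ₗ
          lTensor V (fstMap k W τ.toLinearMap) ∘ₗ fstMap k (W ⊗[k] W) σV.symm.toLinearMap := by
  have hsep' := congrArg (trip W) hsep
  simp only [trip_comp, trip_fstMap, trip_lTensor] at hsep'
  have hphi' := congrArg (fun g => LinearMap.lTensor V g) hphi
  simp only [LinearMap.lTensor_comp] at hphi'
  have hcomm := fstMap_comm_lTensor (k := k) τ.toLinearMap τ.toLinearMap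
  have hφid : φ.symm.toLinearMap ∘ₗ φ.toLinearMap = LinearMap.id := by
    ext x; simp
  have hinv : LinearMap.lTensor V (fstMap k W φ.symm.toLinearMap) ∘ₗ
      LinearMap.lTensor V (fstMap k W φ.toLinearMap) = LinearMap.id := by
    rw [← LinearMap.lTensor_comp, fstMap_comp, hφid, fstMap_id, LinearMap.lTensor_id]
  set A1 := fstMap k (W ⊗[k] W) σV.toLinearMap with hA1
  set A2 := fstMap k (W ⊗[k] W) σV.symm.toLinearMap with hA2
  set B1 := LinearMap.lTensor V (fstMap k W τ.toLinearMap) with hB1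
  set C1 := LinearMap.lTensor V (lTensor V σW.toLinearMap) with hC1
  set C2 := LinearMap.lTensor V (lTensor V σW.symm.toLinearMap) with hC2
  set T12 := fstMap k (V ⊗[k] W) τ.toLinearMap with hT12
  set T34 := LinearMap.lTensor V (LinearMap.lTensor W τ.toLinearMap) with hT34
  set P := LinearMap.lTensor V (fstMap k W φ.toLinearMap) with hP
  set P' := LinearMap.lTensor V (fstMap k W φ.symm.toLinearMap) with hP'
  have key : P ∘ₗ (A1 ∘ₗ B1 ∘ₗ A2 ∘ₗ C1 ∘ₗ B1 ∘ₗ C2) =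
      P ∘ₗ (C1 ∘ₗ B1 ∘ₗ C2 ∘ₗ A1 ∘ₗ B1 ∘ₗ A2) := by
    calc P ∘ₗ (A1 ∘ₗ B1 ∘ₗ A2 ∘ₗ C1 ∘ₗ B1 ∘ₗ C2)
        = (P ∘ₗ A1 ∘ₗ B1 ∘ₗ A2) ∘ₗ (C1 ∘ₗ B1 ∘ₗ C2) := by
          simp only [LinearMap.comp_assoc]
      _ = (T12 ∘ₗ P) ∘ₗ (C1 ∘ₗ B1 ∘ₗ C2) := by rw [← hsep']
      _ = T12 ∘ₗ (P ∘ₗ C1 ∘ₗ B1 ∘ₗ C2) := by simp only [LinearMap.comp_assoc]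
      _ = T12 ∘ₗ (T34 ∘ₗ P) := by rw [← hphi']
      _ = (T12 ∘ₗ T34) ∘ₗ P := by simp only [LinearMap.comp_assoc]
      _ = (T34 ∘ₗ T12) ∘ₗ P := by rw [hcomm]
      _ = T34 ∘ₗ (T12 ∘ₗ P) := by simp only [LinearMap.comp_assoc]
      _ = T34 ∘ₗ (P ∘ₗ A1 ∘ₗ B1 ∘ₗ A2) := by rw [hsep']
      _ = (T34 ∘ₗ P) ∘ₗ (A1 ∘ₗ B1 ∘ₗ A2) := by simp only [LinearMap.comp_assoc]
      _ = (P ∘ₗ C1 ∘ₗ B1 ∘ₗ C2) ∘ₗ (A1 ∘ₗ B1 ∘ₗ A2) := by rw [hphi']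
      _ = P ∘ₗ (C1 ∘ₗ B1 ∘ₗ C2 ∘ₗ A1 ∘ₗ B1 ∘ₗ A2) := by
          simp only [LinearMap.comp_assoc]
  have h3 : (P' ∘ₗ P) ∘ₗ (A1 ∘ₗ B1 ∘ₗ A2 ∘ₗ C1 ∘ₗ B1 ∘ₗ C2) =
      (P' ∘ₗ P) ∘ₗ (C1 ∘ₗ B1 ∘ₗ C2 ∘ₗ A1 ∘ₗ B1 ∘ₗ A2) := by
    rw [LinearMap.comp_assoc, LinearMap.comp_assoc, key]
  rw [hinv, LinearMap.id_comp, LinearMap.id_comp] at h3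
  exact h3
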